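/- Let T be a triangulated category of finite Rouquier dimension, i.e. there exist an object H and an integer d with T = ⟨H⟩_d. Then every generator of T is a strong generator: if G satisfies T = ⋃_{n≥0} ⟨G⟩_n, then there exists an integer m with T = ⟨G⟩_m. -/

import Mathlib

open CategoryTheory Limits Pretriangulated ZeroObject

set_option linter.unusedSectionVars false
set_option maxHeartbeats 1000000

universe v u

namespace OrlovSpec

variable (C : Type u) [Category.{v} C] [HasZeroObject C] [HasShift C ℤ]
  [Preadditive C] [∀ n : ℤ, (shiftFunctor C n).Additive] [Pretriangulated C]
  [HasBinaryBiproducts C]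

/-- `clos0 S` is the smallest class of objects containing `S` that is closed under
isomorphisms, shifts, finite coproducts and direct summands: this is `⟨S⟩₀`. -/
inductive clos0 (S : Set C) : Set C
  | of {X : C} (hX : X ∈ S) : clos0 S X
  | iso {X Y : C} (e : X ≅ Y) (hX : clos0 S X) : clos0 S Y
  | shift {X : C} (n : ℤ) (hX : clos0 S X) : clos0 S (X⟦n⟧)
  | biprod {X Y : C} (hX : clos0 S X) (hY : clos0 S Y) : clos0 S (X ⊞ Y)
  | summand {X Y : C} (r : X ⟶ Y) (s : Y ⟶ X) (hrs : r ≫ s = 𝟙 X) (hY : clos0 S Y) :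
      clos0 S X

/-- `star A B` consists of the extensions of objects of `B` by objects of `A`,
i.e. objects `X` fitting in a distinguished triangle `X₁ ⟶ X ⟶ X₂ ⟶ X₁[1]` with
`X₁ ∈ A` and `X₂ ∈ B`. -/
def star (A B : Set C) : Set C :=
  {X | ∃ (X₁ X₂ : C) (f : X₁ ⟶ X) (g : X ⟶ X₂) (h : X₂ ⟶ X₁⟦(1 : ℤ)⟧),
    Triangle.mk f g h ∈ (distTriang C) ∧ X₁ ∈ A ∧ X₂ ∈ B}

/-- The operation `A ⋄ B`: the closure under isomorphisms, shifts, finite coproducts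
and summands of the class of extensions of objects of `B` by objects of `A`. -/
def diamond (A B : Set C) : Set C := clos0 C (star C A B)

/-- `gen S n = ⟨S⟩ₙ`, the objects generated from `S` using at most `n` cones. -/
def gen (S : Set C) : ℕ → Set C
  | 0 => clos0 C S
  | (n + 1) => diamond C (gen S n) (clos0 C S)

variable {C}

/-- A morphism `f : X ⟶ Y` is `G`-ghost if the induced map
`Hom(G⟦j⟧, X) → Hom(G⟦j⟧, Y)` is zero for all `j : ℤ`. -/
def IsGhost (G : C) {X Y : C} (f : X ⟶ Y) : Prop :=
  ∀ (j : ℤ) (α : (G⟦j⟧ : C) ⟶ X), α ≫ f = 0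

/-- Composition of a chain of morphisms `X 0 ⟶ X 1 ⟶ ⋯ ⟶ X t`. -/
def chainComp (X : ℕ → C) (f : ∀ i, X i ⟶ X (i + 1)) : ∀ t, X 0 ⟶ X t
  | 0 => 𝟙 _
  | (t + 1) => chainComp X f t ≫ f t

/-! ### Basic closure properties of `clos0` and `gen` -/

lemma clos0_mono {S T : Set C} (h : S ⊆ T) : clos0 C S ⊆ clos0 C T := by
  intro X hX
  induction hX with
  | of hX => exact clos0.of (h hX)
  | iso e _ ih => exact clos0.iso e ih
  | shift n _ ih => exact clos0.shift n ih
  | biprod _ _ ih1 ih2 => exact clos0.biprod ih1 ih2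
  | summand r s hrs _ ih => exact clos0.summand r s hrs ih

lemma clos0_idem {S : Set C} : clos0 C (clos0 C S) ⊆ clos0 C S := by
  intro X hX
  induction hX with
  | of hX => exact hX
  | iso e _ ih => exact clos0.iso e ih
  | shift n _ ih => exact clos0.shift n ih
  | biprod _ _ ih1 ih2 => exact clos0.biprod ih1 ih2
  | summand r s hrs _ ih => exact clos0.summand r s hrs ih

lemma gen_clos0 {S : Set C} {n : ℕ} : clos0 C (gen C S n) ⊆ gen C S n := by
  cases n with
  | zero => exact clos0_idem
  | succ n => exact clos0_idem

lemma gen_iso {S : Set C} {n : ℕ} {X Y : C} (e : X ≅ Y) (h : X ∈ gen C S n) :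
    Y ∈ gen C S n := gen_clos0 (clos0.iso e (clos0.of h))

lemma gen_shift {S : Set C} {n : ℕ} {X : C} (m : ℤ) (h : X ∈ gen C S n) :
    (X⟦m⟧ : C) ∈ gen C S n := gen_clos0 (clos0.shift m (clos0.of h))

lemma gen_biprod {S : Set C} {n : ℕ} {X Y : C} (hX : X ∈ gen C S n) (hY : Y ∈ gen C S n) :
    (X ⊞ Y) ∈ gen C S n := gen_clos0 (clos0.biprod (clos0.of hX) (clos0.of hY))

lemma gen_summand {S : Set C} {n : ℕ} {X Y : C} (r : X ⟶ Y) (s : Y ⟶ X)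
    (hrs : r ≫ s = 𝟙 X) (hY : Y ∈ gen C S n) : X ∈ gen C S n :=
  gen_clos0 (clos0.summand r s hrs (clos0.of hY))

lemma zero_mem_clos0 {S : Set C} {Z : C} (hZ : Z ∈ S) : (0 : C) ∈ clos0 C S :=
  clos0.summand (0 : (0 : C) ⟶ Z) 0 ((Limits.isZero_zero C).eq_of_src _ _) (clos0.of hZ)

lemma gen_le_succ {S : Set C} {Z : C} (hZ : Z ∈ S) {n : ℕ} :
    gen C S n ⊆ gen C S (n + 1) := by
  intro X hX
  exact clos0.of ⟨X, 0, 𝟙 X, 0, 0, contractible_distinguished X, hX, zero_mem_clos0 hZ⟩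

lemma gen_le {S : Set C} {Z : C} (hZ : Z ∈ S) {a b : ℕ} (hab : a ≤ b) :
    gen C S a ⊆ gen C S b := by
  induction hab with
  | refl => exact fun _ h => h
  | step _ ih => exact fun X hX => gen_le_succ hZ (ih hX)

/-! ### Binary sums of distinguished triangles -/

noncomputable def prodIsoBiprod (F : WalkingPair → C) :
    (∏ᶜ F) ≅ F WalkingPair.left ⊞ F WalkingPair.right where
  hom := biprod.lift (Pi.π F WalkingPair.left) (Pi.π F WalkingPair.right)
  inv := Pi.lift (fun j => WalkingPair.casesOn j biprod.fst biprod.snd)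
  hom_inv_id := by
    apply limit.hom_ext
    rintro ⟨(_|_)⟩ <;> simp
  inv_hom_id := by
    apply biprod.hom_ext <;> simp

lemma biprod_triangle_dist (T₁ T₂ : Triangle C) (h₁ : T₁ ∈ distTriang C)
    (h₂ : T₂ ∈ distTriang C) :
    ∃ (f : T₁.obj₁ ⊞ T₂.obj₁ ⟶ T₁.obj₂ ⊞ T₂.obj₂) (g : T₁.obj₂ ⊞ T₂.obj₂ ⟶ T₁.obj₃ ⊞ T₂.obj₃)
      (h : T₁.obj₃ ⊞ T₂.obj₃ ⟶ (T₁.obj₁ ⊞ T₂.obj₁)⟦(1:ℤ)⟧),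
      Triangle.mk f g h ∈ distTriang C := by
  let fam : WalkingPair → Triangle C := fun j => WalkingPair.casesOn j T₁ T₂
  have hfam : ∀ j, fam j ∈ distTriang C := by rintro (_|_) <;> assumption
  have hP := productTriangle_distinguished fam hfam
  let P := productTriangle fam
  let e₁ : T₁.obj₁ ⊞ T₂.obj₁ ≅ P.obj₁ := (prodIsoBiprod (fun j => (fam j).obj₁)).symm
  let e₂ : T₁.obj₂ ⊞ T₂.obj₂ ≅ P.obj₂ := (prodIsoBiprod (fun j => (fam j).obj₂)).symm
  let e₃ : T₁.obj₃ ⊞ T₂.obj₃ ≅ P.obj₃ := (prodIsoBiprod (fun j => (fam j).obj₃)).symm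
  refine ⟨e₁.hom ≫ P.mor₁ ≫ e₂.inv, e₂.hom ≫ P.mor₂ ≫ e₃.inv,
    e₃.hom ≫ P.mor₃ ≫ (e₁.inv)⟦(1:ℤ)⟧', isomorphic_distinguished _ hP _ ?_⟩
  refine Triangle.isoMk _ _ e₁ e₂ e₃ ?_ ?_ ?_
  · simp only [Triangle.mk_obj₁, Triangle.mk_obj₂, Triangle.mk_mor₁, Category.assoc,
      Iso.inv_hom_id, Category.comp_id]; show (e₁.hom ≫ P.mor₁ ≫ e₂.inv) ≫ e₂.hom = e₁.hom ≫ P.mor₁; simp only [Category.assoc, Iso.inv_hom_id, Category.comp_id]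
  · simp only [Triangle.mk_obj₂, Triangle.mk_obj₃, Triangle.mk_mor₂, Category.assoc,
      Iso.inv_hom_id, Category.comp_id]; show (e₂.hom ≫ P.mor₂ ≫ e₃.inv) ≫ e₃.hom = e₂.hom ≫ P.mor₂; simp only [Category.assoc, Iso.inv_hom_id, Category.comp_id]
  · simp only [Triangle.mk_obj₃, Triangle.mk_mor₃, Category.assoc, ← Functor.map_comp,
      Iso.inv_hom_id, CategoryTheory.Functor.map_id, Category.comp_id]; show (e₃.hom ≫ P.mor₃ ≫ (shiftFunctor C (1:ℤ)).map e₁.inv) ≫ (shiftFunctor C (1:ℤ)).map e₁.hom = e₃.hom ≫ P.mor₃; simp only [Category.assoc, ← Functor.map_comp, Iso.inv_hom_id, CategoryTheory.Functor.map_id, Category.comp_id]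

/-! ### The honest hierarchy -/

/-- Finite direct sums of shifts of `G` (together with a zero object). -/
inductive sums (G : C) : Set C
  | zero : sums G 0
  | of : sums G G
  | shift (m : ℤ) {X : C} (hX : sums G X) : sums G (X⟦m⟧)
  | biprod {X Y : C} (hX : sums G X) (hY : sums G Y) : sums G (X ⊞ Y)

/-- The "honest" hierarchy: `hon G (n+1)` consists of genuine extensions of objects of
`sums G` by objects of `hon G n` (no closure under retracts). -/
def hon (G : C) : ℕ → Set C
  | 0 => sums G
  | (n + 1) => star C (hon G n) (sums G)

lemma sums_subset_clos0 {G : C} : sums G ⊆ clos0 C ({G} : Set C) := by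
  intro X hX
  induction hX with
  | zero => exact zero_mem_clos0 rfl
  | of => exact clos0.of rfl
  | shift m _ ih => exact clos0.shift m ih
  | biprod _ _ ih₁ ih₂ => exact clos0.biprod ih₁ ih₂

lemma hon_shift {G : C} : ∀ {n : ℕ} {X : C}, X ∈ hon G n → ∀ (m : ℤ), (X⟦m⟧ : C) ∈ hon G n := by
  intro n
  induction n with
  | zero => intro X hX m; exact sums.shift m hX
  | succ n ih =>
    rintro X ⟨X₁, X₂, f, g, h, hT, h₁, h₂⟩ m
    exact ⟨X₁⟦m⟧, X₂⟦m⟧, _, _, _, Triangle.shift_distinguished _ hT m, ih h₁ m, sums.shift m h₂⟩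

lemma hon_biprod {G : C} : ∀ {n : ℕ} {X Y : C}, X ∈ hon G n → Y ∈ hon G n →
    (X ⊞ Y) ∈ hon G n := by
  intro n
  induction n with
  | zero => intro X Y hX hY; exact sums.biprod hX hY
  | succ n ih =>
    rintro X Y ⟨X₁, X₂, f, g, h, hT, h₁, h₂⟩ ⟨Y₁, Y₂, f', g', h', hT', h₁', h₂'⟩
    obtain ⟨f'', g'', h'', hT''⟩ :=
      biprod_triangle_dist (Triangle.mk f g h) (Triangle.mk f' g' h') hT hT'
    exact ⟨X₁ ⊞ Y₁, X₂ ⊞ Y₂, f'', g'', h'', hT'', ih h₁ h₁', sums.biprod h₂ h₂'⟩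

lemma hon_mono {G : C} {n : ℕ} : hon G n ⊆ hon G (n + 1) := by
  intro X hX
  exact ⟨X, 0, 𝟙 X, 0, 0, contractible_distinguished X, hX, sums.zero⟩

lemma hon_subset_gen {G : C} : ∀ {n : ℕ}, hon G n ⊆ gen C ({G} : Set C) n := by
  intro n
  induction n with
  | zero => exact fun X hX => sums_subset_clos0 hX
  | succ n ih =>
    rintro X ⟨X₁, X₂, f, g, h, hT, h₁, h₂⟩
    exact clos0.of ⟨X₁, X₂, f, g, h, hT, ih h₁, sums_subset_clos0 h₂⟩

/-! ### The sandwich lemma: being a retract of a modified extension -/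

lemma summand_sandwich {X₁ X B Y₁ X' P : C}
    {a : X₁ ⟶ X} {b : X ⟶ B} {c : B ⟶ X₁⟦(1:ℤ)⟧} (hT : Triangle.mk a b c ∈ distTriang C)
    {a' : Y₁ ⟶ X'} {b' : X' ⟶ P} {c' : P ⟶ Y₁⟦(1:ℤ)⟧} (hT' : Triangle.mk a' b' c' ∈ distTriang C)
    (r₁ : X₁ ⟶ Y₁) (s₁ : Y₁ ⟶ X₁) (hrs₁ : r₁ ≫ s₁ = 𝟙 X₁)
    (r₂ : B ⟶ P) (s₂ : P ⟶ B) (hrs₂ : r₂ ≫ s₂ = 𝟙 B)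
    (comm₁ : c ≫ r₁⟦(1:ℤ)⟧' = r₂ ≫ c') (comm₂ : c' ≫ s₁⟦(1:ℤ)⟧' = s₂ ≫ c) :
    ∃ (u : X ⟶ X' ⊞ X₁) (v : X' ⊞ X₁ ⟶ X), u ≫ v = 𝟙 X := by
  obtain ⟨φ₀, hφ₁, hφ₂⟩ := complete_distinguished_triangle_morphism₂ _ _ hT hT' r₁ r₂ comm₁
  obtain ⟨ψ₀, hψ₁, hψ₂⟩ := complete_distinguished_triangle_morphism₂ _ _ hT' hT s₁ s₂ comm₂
  let φ : X ⟶ X' := φ₀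
  let ψ : X' ⟶ X := ψ₀
  have hφ₂' : b ≫ r₂ = φ ≫ b' := hφ₂
  have hψ₂' : b' ≫ s₂ = ψ ≫ b := hψ₂
  have h0 : (𝟙 X - φ ≫ ψ) ≫ b = 0 := by
    rw [Preadditive.sub_comp, Category.id_comp, Category.assoc, ← hψ₂', ← Category.assoc,
      ← hφ₂', Category.assoc, hrs₂, Category.comp_id, sub_self]
  obtain ⟨τ₀, hτ⟩ := Triangle.coyoneda_exact₂ _ hT (𝟙 X - φ ≫ ψ) h0
  let τ : X ⟶ X₁ := τ₀
  have hτ' : 𝟙 X - φ ≫ ψ = τ ≫ a := hτ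
  refine ⟨biprod.lift φ τ, biprod.desc ψ a, ?_⟩
  rw [biprod.lift_desc, ← hτ', add_sub_cancel]

/-! ### Normal form: every object of `gen {G} n` is a retract of an object of `hon G n` -/

lemma nf_clos0 {G : C} {k : ℕ} {S : Set C}
    (hS : ∀ Y ∈ S, ∃ P, P ∈ hon G k ∧ ∃ (u : Y ⟶ P) (v : P ⟶ Y), u ≫ v = 𝟙 Y) :
    ∀ {X : C}, X ∈ clos0 C S → ∃ P, P ∈ hon G k ∧ ∃ (u : X ⟶ P) (v : P ⟶ X), u ≫ v = 𝟙 X := by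
  intro X hX
  induction hX with
  | of hX => exact hS _ hX
  | iso e _ ih =>
    obtain ⟨P, hP, u, v, huv⟩ := ih
    exact ⟨P, hP, e.inv ≫ u, v ≫ e.hom, by
      rw [Category.assoc, ← Category.assoc u, huv, Category.id_comp, Iso.inv_hom_id]⟩
  | shift m _ ih =>
    obtain ⟨P, hP, u, v, huv⟩ := ih
    exact ⟨P⟦m⟧, hon_shift hP m, u⟦m⟧', v⟦m⟧', by
      rw [← Functor.map_comp, huv, CategoryTheory.Functor.map_id]⟩
  | biprod _ _ ih₁ ih₂ =>
    obtain ⟨P, hP, u, v, huv⟩ := ih₁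
    obtain ⟨Q, hQ, u', v', huv'⟩ := ih₂
    exact ⟨P ⊞ Q, hon_biprod hP hQ, biprod.map u u', biprod.map v v', by
      ext <;> simp [huv, huv']⟩
  | summand r s hrs _ ih =>
    obtain ⟨P, hP, u, v, huv⟩ := ih
    exact ⟨P, hP, r ≫ u, v ≫ s, by
      rw [Category.assoc, ← Category.assoc u, huv, Category.id_comp, hrs]⟩

lemma normal_form {G : C} : ∀ {n : ℕ} {X : C}, X ∈ gen C ({G} : Set C) n →
    ∃ P, P ∈ hon G n ∧ ∃ (u : X ⟶ P) (v : P ⟶ X), u ≫ v = 𝟙 X := by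
  intro n
  induction n with
  | zero =>
    intro X hX
    refine nf_clos0 ?_ hX
    rintro Y hY
    obtain rfl : Y = G := hY
    exact ⟨_, sums.of, 𝟙 _, 𝟙 _, Category.id_comp _⟩
  | succ n ih =>
    intro X hX
    refine nf_clos0 ?_ hX
    rintro Y ⟨X₁, X₂, a, b, c, hT, h₁, h₂⟩
    obtain ⟨P₁, hP₁, r₁, s₁, hrs₁⟩ := ih h₁
    obtain ⟨P₂, hP₂, r₂, s₂, hrs₂⟩ := nf_clos0 (G := G) (k := 0)
      (by
        rintro Z hZ
        obtain rfl : Z = G := hZ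
        exact ⟨_, sums.of, 𝟙 _, 𝟙 _, Category.id_comp _⟩) h₂
    obtain ⟨P, a', b', hT'⟩ := distinguished_cocone_triangle₂ (s₂ ≫ c ≫ r₁⟦(1:ℤ)⟧')
    have hP : P ∈ hon G (n + 1) := ⟨P₁, P₂, a', b', _, hT', hP₁, hP₂⟩
    obtain ⟨u, v, huv⟩ := summand_sandwich hT hT' r₁ s₁ hrs₁ r₂ s₂ hrs₂
      (by rw [← Category.assoc, ← Category.assoc, hrs₂, Category.id_comp])
      (by simp only [Category.assoc, ← Functor.map_comp, hrs₁,
        CategoryTheory.Functor.map_id, Category.comp_id])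
    refine ⟨P ⊞ P₁, hon_biprod hP (hon_mono hP₁),
      u ≫ biprod.map (𝟙 P) r₁, biprod.map (𝟙 P) s₁ ≫ v, ?_⟩
    have hmm : biprod.map (𝟙 P) r₁ ≫ biprod.map (𝟙 P) s₁ = 𝟙 (P ⊞ X₁) := by
      ext <;> simp [hrs₁]
    rw [Category.assoc, ← Category.assoc (biprod.map (𝟙 P) r₁), hmm, Category.id_comp, huv]

/-! ### Absorption: a cone over `hon G n` with fiber in `gen {G} q` lies in `gen {G} (q+n+1)` -/

lemma absorb_hon {G : C} : ∀ (n : ℕ) {B : C}, B ∈ hon G n →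
    ∀ {q : ℕ} {X₁ X : C} {a : X₁ ⟶ X} {b : X ⟶ B} {c : B ⟶ X₁⟦(1:ℤ)⟧},
      (Triangle.mk a b c ∈ distTriang C) → X₁ ∈ gen C ({G} : Set C) q →
      X ∈ gen C ({G} : Set C) (q + n + 1) := by
  intro n
  induction n with
  | zero =>
    intro B hB q X₁ X a b c hT h₁
    exact clos0.of ⟨X₁, B, a, b, c, hT, h₁, sums_subset_clos0 hB⟩
  | succ n ih =>
    rintro B ⟨B₁, B₂, ay, by', cy, hTB, hB₁, hB₂⟩ q X₁ X a b c hT h₁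
    have hGmem : G ∈ ({G} : Set C) := rfl
    -- Step A : complete `b ≫ by' : X ⟶ B₂` to a triangle `F ⟶ X ⟶ B₂ ⟶ F⟦1⟧`
    obtain ⟨Z, g0, h0, hT0⟩ := distinguished_cocone_triangle (b ≫ by')
    set TF := (Triangle.mk (b ≫ by') g0 h0).invRotate with hTFdef
    have hTF : TF ∈ distTriang C := inv_rot_of_distTriang _ hT0
    let w : TF.obj₁ ⟶ X := TF.mor₁
    -- Step B : `w ≫ b` factors through `ay : B₁ ⟶ B`
    have hwb : (w ≫ b) ≫ by' = 0 := by
      rw [Category.assoc]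
      exact comp_distTriang_mor_zero₁₂ _ hTF
    obtain ⟨e₀, he⟩ := Triangle.coyoneda_exact₂ _ hTB (w ≫ b) hwb
    let e : TF.obj₁ ⟶ B₁ := e₀
    have he' : w ≫ b = e ≫ ay := he
    -- Step C : build `E`, the cone of `ay ≫ c`; it lies in `gen {G} (q+n+1)` by induction
    obtain ⟨E, i, p, hTE⟩ := distinguished_cocone_triangle₂ (ay ≫ c)
    have hE : E ∈ gen C ({G} : Set C) (q + n + 1) := ih hB₁ hTE h₁
    obtain ⟨φ₀, hφ₁, hφ₂⟩ := complete_distinguished_triangle_morphism₂ _ _ hTE hT (𝟙 X₁) ay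
      (by erw [CategoryTheory.Functor.map_id, Category.comp_id]; rfl)
    let φ : E ⟶ X := φ₀
    have hφ₂' : p ≫ ay = φ ≫ b := hφ₂
    have hec : e ≫ (ay ≫ c) = 0 := by
      rw [← Category.assoc, ← he', Category.assoc]
      have h23 : b ≫ c = 0 := comp_distTriang_mor_zero₂₃ _ hT
      rw [h23, Limits.comp_zero]
    obtain ⟨σ₀, hσ⟩ := Triangle.coyoneda_exact₃ _ hTE e hec
    let σ : TF.obj₁ ⟶ E := σ₀
    have hσ' : e = σ ≫ p := hσ
    have hw0 : (w - σ ≫ φ) ≫ b = 0 := by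
      rw [Preadditive.sub_comp, Category.assoc, ← hφ₂', ← Category.assoc, ← hσ', ← he',
        sub_self]
    obtain ⟨τ₀, hτ⟩ := Triangle.coyoneda_exact₂ _ hT (w - σ ≫ φ) hw0
    let τ : TF.obj₁ ⟶ X₁ := τ₀
    have hτ' : w - σ ≫ φ = τ ≫ a := hτ
    -- the factorization `TF.mor₁ = β' ≫ v'` through `E ⊞ X₁`
    let β' : TF.obj₁ ⟶ E ⊞ X₁ := biprod.lift σ τ
    let v' : E ⊞ X₁ ⟶ X := biprod.desc φ a
    have hw : w = β' ≫ v' := by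
      rw [show β' ≫ v' = σ ≫ φ + τ ≫ a from biprod.lift_desc, ← hτ', add_sub_cancel]
    have hW' : (E ⊞ X₁) ∈ gen C ({G} : Set C) (q + n + 1) :=
      gen_biprod hE (gen_le hGmem (show q ≤ q + n + 1 by omega) h₁)
    -- Step D : dualize; build `E'`, the cone of `TG.mor₁ ≫ β'`
    set TG := TF.invRotate with hTGdef
    have hTG : TG ∈ distTriang C := inv_rot_of_distTriang _ hTF
    obtain ⟨E', j, e', hTE'⟩ := distinguished_cocone_triangle (TG.mor₁ ≫ β')
    obtain ⟨ψ₀, hψ₁, hψ₂⟩ := complete_distinguished_triangle_morphism _ _ hTG hTE'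
      (𝟙 _) β' (by exact (Category.id_comp _).symm)
    let ψ : X ⟶ E' := ψ₀
    have hwψ : w ≫ ψ = β' ≫ j := hψ₁
    have hθv : (TG.mor₁ ≫ β') ≫ v' = 0 := by
      have hzero : TG.mor₁ ≫ w = 0 := comp_distTriang_mor_zero₁₂ _ hTG
      erw [Category.assoc, ← hw, hzero]
    obtain ⟨σ'₀, hσ'2⟩ := Triangle.yoneda_exact₂ _ hTE' v' hθv
    let σ' : E' ⟶ X := σ'₀
    have hσ'2' : v' = j ≫ σ' := hσ'2
    have hrem : w ≫ (𝟙 X - ψ ≫ σ') = 0 := by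
      rw [Preadditive.comp_sub, Category.comp_id, ← Category.assoc, hwψ, Category.assoc,
        ← hσ'2', ← hw, sub_self]
    obtain ⟨τ'₀, hτ'2⟩ := Triangle.yoneda_exact₂ _ hTF (𝟙 X - ψ ≫ σ') hrem
    let τ' : TF.obj₃ ⟶ X := τ'₀
    have hτ'2' : 𝟙 X - ψ ≫ σ' = TF.mor₂ ≫ τ' := hτ'2
    -- membership of `E'` : rotate its defining triangle
    have hrot := rot_of_distTriang _ hTE'
    have hB₂shift : (((TG.obj₁) : C)⟦(1:ℤ)⟧) ∈ clos0 C ({G} : Set C) := by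
      have : TG.obj₁ = (B₂⟦(-1:ℤ)⟧ : C) := rfl
      rw [this]
      exact clos0.shift 1 (clos0.shift (-1) (sums_subset_clos0 hB₂))
    have hE' : E' ∈ gen C ({G} : Set C) (q + n + 1 + 1) :=
      clos0.of ⟨E ⊞ X₁, (TG.obj₁)⟦(1:ℤ)⟧, j, e', _, hrot, hW', hB₂shift⟩
    -- conclusion : `X` is a retract of `E' ⊞ B₂`
    have hB₂gen : (TF.obj₃ : C) ∈ gen C ({G} : Set C) (q + n + 1 + 1) := by
      have : TF.obj₃ = B₂ := rfl
      rw [this]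
      exact gen_le hGmem (show 0 ≤ q + n + 1 + 1 by omega) (sums_subset_clos0 hB₂)
    have : X ∈ gen C ({G} : Set C) (q + n + 1 + 1) := by
      refine gen_summand (biprod.lift ψ TF.mor₂) (biprod.desc σ' τ') ?_
        (gen_biprod hE' hB₂gen)
      erw [biprod.lift_desc, ← hτ'2', add_sub_cancel]
    have harith : q + n + 1 + 1 = q + (n + 1) + 1 := by omega
    rwa [harith] at this

/-! ### Absorption for a general second argument in `gen` -/

lemma absorb {G : C} {n : ℕ} {B : C} (hB : B ∈ gen C ({G} : Set C) n)
    {q : ℕ} {X₁ X : C} {a : X₁ ⟶ X} {b : X ⟶ B} {c : B ⟶ X₁⟦(1:ℤ)⟧}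
    (hT : Triangle.mk a b c ∈ distTriang C) (h₁ : X₁ ∈ gen C ({G} : Set C) q) :
    X ∈ gen C ({G} : Set C) (q + n + 1) := by
  obtain ⟨P, hP, r₂, s₂, hrs₂⟩ := normal_form hB
  obtain ⟨X', a', b', hT'⟩ := distinguished_cocone_triangle₂ (s₂ ≫ c)
  have hX' : X' ∈ gen C ({G} : Set C) (q + n + 1) := absorb_hon n hP hT' h₁
  obtain ⟨u, v, huv⟩ := summand_sandwich hT hT' (𝟙 X₁) (𝟙 X₁) (Category.id_comp _) r₂ s₂ hrs₂
    (by rw [CategoryTheory.Functor.map_id, Category.comp_id, ← Category.assoc, hrs₂,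
      Category.id_comp])
    (by rw [CategoryTheory.Functor.map_id, Category.comp_id])
  have hGmem : G ∈ ({G} : Set C) := rfl
  exact gen_summand u v huv (gen_biprod hX'
    (gen_le hGmem (show q ≤ q + n + 1 by omega) h₁))

/-! ### Transferring generation from `H` to `G` -/

lemma clos0_singleton_subset_gen {G Y : C} {n : ℕ} (hY : Y ∈ gen C ({G} : Set C) n) :
    clos0 C ({Y} : Set C) ⊆ gen C ({G} : Set C) n := by
  intro X hX
  induction hX with
  | of h => obtain rfl : _ = Y := h; exact hY
  | iso e _ ih => exact gen_iso e ih
  | shift m _ ih => exact gen_shift m ih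
  | biprod _ _ ih₁ ih₂ => exact gen_biprod ih₁ ih₂
  | summand r s hrs _ ih => exact gen_summand r s hrs ih

lemma transfer {G H : C} {nG : ℕ} (hHG : H ∈ gen C ({G} : Set C) nG) :
    ∀ (k : ℕ) {X : C}, X ∈ gen C ({H} : Set C) k →
      X ∈ gen C ({G} : Set C) (nG + k * (nG + 1)) := by
  intro k
  induction k with
  | zero =>
    intro X hX
    simpa using clos0_singleton_subset_gen hHG hX
  | succ k ih =>
    intro X hX
    have hstar : star C (gen C ({H} : Set C) k) (clos0 C ({H} : Set C)) ⊆
        gen C ({G} : Set C) (nG + (k + 1) * (nG + 1)) := by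
      rintro Z ⟨X₁, X₂, f, g, h, hT, h₁, h₂⟩
      have h₂' : X₂ ∈ gen C ({G} : Set C) nG := clos0_singleton_subset_gen hHG h₂
      have hmem := absorb h₂' hT (ih h₁)
      have harith : nG + k * (nG + 1) + nG + 1 = nG + (k + 1) * (nG + 1) := by ring
      rwa [harith] at hmem
    exact gen_clos0 (clos0_mono hstar hX)

/-- In a triangulated category of finite Rouquier dimension, every generator is a strong
generator. -/
theorem strong_of_gen (H : C) (d : ℕ) (hH : ∀ X : C, X ∈ gen C ({H} : Set C) d)
    (G : C) (hG : ∀ X : C, ∃ n : ℕ, X ∈ gen C ({G} : Set C) n) :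
    ∃ m : ℕ, ∀ X : C, X ∈ gen C ({G} : Set C) m := by
  obtain ⟨n, hn⟩ := hG H
  exact ⟨n + d * (n + 1), fun X => transfer hn d (hH X)⟩

end OrlovSpec
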